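/- Let G = K_{n_1,...,n_k} with k ≥ 2 and n_1 ≤ ... ≤ n_k, and let s = n_1 + ... + n_{k-1}. For every (s+1)-assignment L for G and every request r of L with nonempty domain D (i.e., r: D → colors with r(v) ∈ L(v)), there exists a proper L-coloring of G satisfying at least |D|/k of the vertex requests, i.e., f(v) = r(v) for at least |D|/k vertices v ∈ D. -/

import Mathlib

open Finset

/-- `f` is a proper `L`-coloring of `G`: every vertex gets a color from its list and
adjacent vertices get different colors. -/
def properListColoring {V : Type*} (G : SimpleGraph V) (L : V → Finset ℕ) (f : V → ℕ) : Prop :=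
  (∀ v, f v ∈ L v) ∧ ∀ u v, G.Adj u v → f u ≠ f v

section helpers

lemma cross_mul {w : ℕ → ℕ} {X Y : Finset ℕ}
    (h : ∀ x ∈ X, ∀ y ∈ Y, w y ≤ w x) :
    X.card * ∑ y ∈ Y, w y ≤ Y.card * ∑ x ∈ X, w x := by
  calc X.card * ∑ y ∈ Y, w y = ∑ _x ∈ X, ∑ y ∈ Y, w y := by
        rw [Finset.sum_const, smul_eq_mul]
    _ ≤ ∑ x ∈ X, ∑ _y ∈ Y, w x := Finset.sum_le_sum fun x hx =>
        Finset.sum_le_sum fun y hy => h x hx y hy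
    _ = ∑ x ∈ X, Y.card * w x := by
        refine Finset.sum_congr rfl fun x _ => ?_
        rw [Finset.sum_const, smul_eq_mul]
    _ = Y.card * ∑ x ∈ X, w x := by rw [Finset.mul_sum]

lemma popsum {V : Type*} [DecidableEq V] (P : Finset V) (r : V → ℕ) (Fs : Finset ℕ) :
    (P.filter fun v => r v ∈ Fs).card = ∑ c ∈ Fs, (P.filter fun v => r v = c).card := by
  rw [Finset.card_eq_sum_card_fiberwise (s := P.filter fun v => r v ∈ Fs) (f := r) (t := Fs)
    (fun v hv => (Finset.mem_filter.mp hv).2)]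
  refine Finset.sum_congr rfl fun c hc => ?_
  congr 1
  ext v
  simp only [Finset.mem_filter]
  constructor
  · rintro ⟨⟨hP, _⟩, hc'⟩; exact ⟨hP, hc'⟩
  · rintro ⟨hP, hc'⟩; exact ⟨⟨hP, by rw [hc']; exact hc⟩, hc'⟩

lemma toptrim (w : ℕ → ℕ) : ∀ (j : ℕ) (U : Finset ℕ), j ≤ U.card →
    ∃ T, T ⊆ U ∧ T.card = j ∧ ∀ c ∈ T, ∀ c' ∈ U \ T, w c' ≤ w c := by
  intro j
  induction j with
  | zero => intro U _; exact ⟨∅, empty_subset _, card_empty, by simp⟩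
  | succ j ih =>
    intro U hU
    have hUne : U.Nonempty := card_pos.mp (by omega)
    obtain ⟨c0, hc0U, hc0max⟩ := Finset.exists_max_image U w hUne
    obtain ⟨T', hT'sub, hT'card, hT'top⟩ := ih (U.erase c0) (by
      rw [card_erase_of_mem hc0U]; omega)
    have hc0T' : c0 ∉ T' := fun h => (Finset.mem_erase.mp (hT'sub h)).1 rfl
    refine ⟨insert c0 T', ?_, ?_, ?_⟩
    · exact insert_subset hc0U (hT'sub.trans (erase_subset _ _))
    · rw [card_insert_of_notMem hc0T', hT'card]
    · intro c hc c' hc'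
      rcases Finset.mem_insert.mp hc with rfl | hcT'
      · exact hc0max c' (mem_sdiff.mp hc').1
      · refine hT'top c hcT' c' ?_
        have hc'U := mem_sdiff.mp hc'
        refine mem_sdiff.mpr ⟨Finset.mem_erase.mpr ⟨?_, hc'U.1⟩, ?_⟩
        · rintro rfl; exact hc'U.2 (mem_insert_self _ _)
        · exact fun h => hc'U.2 (mem_insert_of_mem h)


set_option maxHeartbeats 1000000 in
lemma hit {V ι : Type*} [DecidableEq V] [DecidableEq ι] (P : Finset V) (r : V → ℕ)
    (a : ℕ) (ha : 1 ≤ a) :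
    ∀ (N : ℕ) (J : Finset ι) (A : ι → Finset ℕ), J.card ≤ N →
    (∀ u ∈ J, a ≤ (A u).card) →
    ∃ F : Finset ℕ, F ⊆ J.biUnion A ∧ (∀ u ∈ J, ((A u) ∩ F).Nonempty) ∧
      (a + J.card - 1) * (P.filter fun v => r v ∈ F).card ≤
        J.card * (P.filter fun v => r v ∈ J.biUnion A).card := by
  intro N
  induction N with
  | zero =>
    intro J A hJ _
    have hJe : J = ∅ := card_eq_zero.mp (Nat.le_antisymm hJ (Nat.zero_le _))
    subst hJe
    exact ⟨∅, by simp, by simp, by simp⟩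
  | succ N ih =>
    intro J A hJ hA
    rcases J.eq_empty_or_nonempty with rfl | hJne
    · exact ⟨∅, by simp, by simp, by simp⟩
    set U := J.biUnion A with hUdef
    set w : ℕ → ℕ := fun c => (P.filter fun v => r v = c).card with hwdef
    obtain ⟨a0, rfl⟩ : ∃ a0, a = a0 + 1 := ⟨a - 1, by omega⟩
    have hm1 : 1 ≤ J.card := hJne.card_pos
    obtain ⟨u0, hu0⟩ := hJne
    have hAU : ∀ u ∈ J, A u ⊆ U := fun u hu => subset_biUnion_of_mem A hu
    have haU : a0 + 1 ≤ U.card := le_trans (hA u0 hu0) (card_le_card (hAU u0 hu0))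
    by_cases hUc : U.card ≤ a0 + J.card
    · -- trim case
      obtain ⟨T, hTU, hTcard, hTtop⟩ := toptrim w a0 U (by omega)
      refine ⟨U \ T, sdiff_subset, ?_, ?_⟩
      · intro u hu
        have h1 : A u ∩ (U \ T) = A u \ T := by
          ext c
          simp only [mem_inter, mem_sdiff]
          exact ⟨fun ⟨h2, _, h4⟩ => ⟨h2, h4⟩, fun ⟨h2, h4⟩ => ⟨h2, hAU u hu h2, h4⟩⟩
        rw [h1]
        apply card_pos.mp
        have := Finset.le_card_sdiff T (A u)
        have := hA u hu
        omega
      · have hcross : a0 * (∑ c ∈ U \ T, w c) ≤ (U.card - a0) * (∑ c ∈ T, w c) := by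
          have := cross_mul (X := T) (Y := U \ T) (w := w) (fun x hx y hy => hTtop x hx y hy)
          rw [hTcard, card_sdiff_of_subset hTU, hTcard] at this
          exact this
        rw [popsum, popsum]
        have hsplit : (∑ c ∈ U \ T, w c) + (∑ c ∈ T, w c) = ∑ c ∈ U, w c :=
          Finset.sum_sdiff hTU
        have hUcard : U.card - a0 ≤ J.card := by omega
        have h2 : (U.card - a0) * (∑ c ∈ T, w c) ≤ J.card * (∑ c ∈ T, w c) :=
          Nat.mul_le_mul_right _ hUcard
        calc (a0 + 1 + J.card - 1) * (∑ c ∈ U \ T, w c)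
            = a0 * (∑ c ∈ U \ T, w c) + J.card * (∑ c ∈ U \ T, w c) := by
              have : a0 + 1 + J.card - 1 = a0 + J.card := by omega
              rw [this]; ring
          _ ≤ J.card * (∑ c ∈ T, w c) + J.card * (∑ c ∈ U \ T, w c) := by
              have := le_trans hcross h2; omega
          _ = J.card * (∑ c ∈ U, w c) := by rw [← hsplit]; ring
    · -- min color case
      have hUne : U.Nonempty := card_pos.mp (by omega)
      obtain ⟨c0, hc0U, hc0min⟩ := Finset.exists_min_image U w hUne
      have hwstar : (a0 + 1 + J.card) * w c0 ≤ (P.filter fun v => r v ∈ U).card := by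
        rw [popsum]
        have hnsmul : U.card * w c0 ≤ ∑ c ∈ U, w c := by
          have := Finset.card_nsmul_le_sum U w (w c0) (fun x hx => hc0min x hx)
          simpa [smul_eq_mul] using this
        calc (a0 + 1 + J.card) * w c0 ≤ U.card * w c0 := Nat.mul_le_mul_right _ (by omega)
          _ ≤ ∑ c ∈ U, w c := hnsmul
      set J' := J.filter (fun u => c0 ∉ A u) with hJ'def
      have hJ'sub : J' ⊆ J := filter_subset _ _
      obtain ⟨uc, hucJ, hucA⟩ := mem_biUnion.mp hc0U
      have hucJ' : uc ∉ J' := fun h => (mem_filter.mp h).2 hucA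
      have hJ'lt : J'.card < J.card := card_lt_card ⟨hJ'sub, fun hsub => hucJ' (hsub hucJ)⟩
      rcases J'.eq_empty_or_nonempty with hJ'e | hJ'ne
      · -- every A u contains c0
        have hall : ∀ u ∈ J, c0 ∈ A u := by
          intro u hu
          by_contra hc
          have : u ∈ J' := mem_filter.mpr ⟨hu, hc⟩
          rw [hJ'e] at this
          exact absurd this (notMem_empty u)
        refine ⟨{c0}, singleton_subset_iff.mpr hc0U, fun u hu =>
          ⟨c0, mem_inter.mpr ⟨hall u hu, mem_singleton_self c0⟩⟩, ?_⟩
        have hpop : (P.filter fun v => r v ∈ ({c0} : Finset ℕ)).card = w c0 := by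
          rw [popsum, Finset.sum_singleton]
        rw [hpop]
        calc (a0 + 1 + J.card - 1) * w c0 ≤ (a0 + 1 + J.card) * w c0 :=
              Nat.mul_le_mul_right _ (by omega)
          _ ≤ (P.filter fun v => r v ∈ U).card := hwstar
          _ ≤ J.card * (P.filter fun v => r v ∈ U).card := Nat.le_mul_of_pos_left _ hm1
      · -- recurse
        obtain ⟨F', hF'U, hF'hit, hF'ineq⟩ := ih J' A (by omega)
          (fun u hu => hA u (hJ'sub hu))
        have hU'U : J'.biUnion A ⊆ U := biUnion_subset_biUnion_of_subset_left A hJ'sub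
        refine ⟨insert c0 F', insert_subset hc0U (hF'U.trans hU'U), ?_, ?_⟩
        · intro u hu
          by_cases hcu : c0 ∈ A u
          · exact ⟨c0, mem_inter.mpr ⟨hcu, mem_insert_self _ _⟩⟩
          · obtain ⟨x, hx⟩ := hF'hit u (mem_filter.mpr ⟨hu, hcu⟩)
            have := mem_inter.mp hx
            exact ⟨x, mem_inter.mpr ⟨this.1, mem_insert_of_mem this.2⟩⟩
        · -- arithmetic
          obtain ⟨m1, hm1eq⟩ : ∃ m1, J'.card = m1 + 1 := ⟨J'.card - 1, by
            have := hJ'ne.card_pos; omega⟩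
          obtain ⟨m0, hm0eq⟩ : ∃ m0, J.card = m0 + 2 := ⟨J.card - 2, by omega⟩
          set x := (P.filter fun v => r v ∈ F').card with hxdef
          set Wt := (P.filter fun v => r v ∈ U).card with hWtdef
          set W' := (P.filter fun v => r v ∈ J'.biUnion A).card with hW'def
          have hc0U' : c0 ∉ J'.biUnion A := by
            intro hc
            obtain ⟨u, huJ', hcA⟩ := mem_biUnion.mp hc
            exact (mem_filter.mp huJ').2 hcA
          have hWW : W' + w c0 ≤ Wt := by
            have hdisj : Disjoint (P.filter fun v => r v ∈ J'.biUnion A)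
                (P.filter fun v => r v = c0) := by
              refine disjoint_filter_filter' _ _ ?_
              simp only [Function.onFun, disjoint_iff_inf_le]
              intro v hv
              rcases hv with ⟨h1, h2⟩
              exact absurd (h2 ▸ h1) hc0U'
            have hsub : (P.filter fun v => r v ∈ J'.biUnion A) ∪
                (P.filter fun v => r v = c0) ⊆ (P.filter fun v => r v ∈ U) := by
              intro v hv
              rcases mem_union.mp hv with h | h
              · exact mem_filter.mpr ⟨(mem_filter.mp h).1, hU'U (mem_filter.mp h).2⟩
              · exact mem_filter.mpr ⟨(mem_filter.mp h).1, (mem_filter.mp h).2 ▸ hc0U⟩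
            calc W' + w c0 = ((P.filter fun v => r v ∈ J'.biUnion A) ∪
                  (P.filter fun v => r v = c0)).card := (card_union_of_disjoint hdisj).symm
              _ ≤ Wt := card_le_card hsub
          have hpopins : (P.filter fun v => r v ∈ insert c0 F').card ≤ w c0 + x := by
            have hsub : (P.filter fun v => r v ∈ insert c0 F') ⊆
                (P.filter fun v => r v = c0) ∪ (P.filter fun v => r v ∈ F') := by
              intro v hv
              have := mem_filter.mp hv
              rcases mem_insert.mp this.2 with h | h
              · exact mem_union_left _ (mem_filter.mpr ⟨this.1, h⟩)
              · exact mem_union_right _ (mem_filter.mpr ⟨this.1, h⟩)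
            calc (P.filter fun v => r v ∈ insert c0 F').card
                ≤ ((P.filter fun v => r v = c0) ∪ (P.filter fun v => r v ∈ F')).card :=
                  card_le_card hsub
              _ ≤ w c0 + x := card_union_le _ _
          -- key chain
          have hmono2 : (a0 + m0 + 1) * x ≤ (m0 + 1) * W' := by
            have hm1m0 : m1 ≤ m0 := by omega
            have h1 : (a0 + m0 + 1) * (m1 + 1) ≤ (m0 + 1) * (a0 + m1 + 1) := by
              nlinarith [Nat.mul_le_mul_left a0 hm1m0]
            have h2 : (a0 + 1 + J'.card - 1) * x ≤ J'.card * W' := hF'ineq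
            rw [hm1eq] at h2
            have h2' : (a0 + m1 + 1) * x ≤ (m1 + 1) * W' := by
              have : a0 + 1 + (m1 + 1) - 1 = a0 + m1 + 1 := by omega
              rw [this] at h2; exact h2
            have h3 : (a0 + m1 + 1) * ((a0 + m0 + 1) * x) ≤ (a0 + m1 + 1) * ((m0 + 1) * W') := by
              calc (a0 + m1 + 1) * ((a0 + m0 + 1) * x) = (a0 + m0 + 1) * ((a0 + m1 + 1) * x) := by ring
                _ ≤ (a0 + m0 + 1) * ((m1 + 1) * W') := Nat.mul_le_mul_left _ h2'
                _ = ((a0 + m0 + 1) * (m1 + 1)) * W' := by ring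
                _ ≤ ((m0 + 1) * (a0 + m1 + 1)) * W' := Nat.mul_le_mul_right _ h1
                _ = (a0 + m1 + 1) * ((m0 + 1) * W') := by ring
            exact Nat.le_of_mul_le_mul_left h3 (by omega)
          rw [hm0eq]
          have hgoal : (a0 + m0 + 1) * ((a0 + 1 + (m0 + 2) - 1) * (w c0 + x)) ≤
              (a0 + m0 + 1) * ((m0 + 2) * Wt) := by
            have hstep : (a0 + m0 + 2) * (w c0 + x) * (a0 + m0 + 1) ≤
                (a0 + m0 + 2) * ((a0 + m0 + 1) * w c0) + (a0 + m0 + 2) * ((m0 + 1) * W') := by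
              calc (a0 + m0 + 2) * (w c0 + x) * (a0 + m0 + 1)
                  = (a0 + m0 + 2) * ((a0 + m0 + 1) * w c0) + (a0 + m0 + 2) * ((a0 + m0 + 1) * x) := by ring
                _ ≤ (a0 + m0 + 2) * ((a0 + m0 + 1) * w c0) + (a0 + m0 + 2) * ((m0 + 1) * W') := by
                    have := Nat.mul_le_mul_left (a0 + m0 + 2) hmono2; omega
            have hWle : W' ≤ Wt - w c0 := by omega
            have hw0le : (a0 + m0 + 2) * w c0 ≤ Wt := by
              have he : a0 + 1 + (m0 + 2) = a0 + m0 + 3 := by omega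
              rw [hm0eq, he] at hwstar
              calc (a0 + m0 + 2) * w c0 ≤ (a0 + m0 + 3) * w c0 :=
                    Nat.mul_le_mul_right _ (by omega)
                _ ≤ Wt := hwstar
            -- final inequality in ℤ
            have final : (a0 + m0 + 2) * ((a0 + m0 + 1) * w c0) + (a0 + m0 + 2) * ((m0 + 1) * W')
                ≤ (a0 + m0 + 1) * ((m0 + 2) * Wt) := by
              zify
              have hWWz : (W' : ℤ) + w c0 ≤ Wt := by exact_mod_cast hWW
              have hw0z : ((a0 : ℤ) + m0 + 2) * w c0 ≤ Wt := by exact_mod_cast hw0le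
              have e1 : ((a0:ℤ)+m0+2) * ((m0+1) * (W':ℤ)) ≤
                  ((a0:ℤ)+m0+2) * ((m0+1) * ((Wt:ℤ) - w c0)) := by
                apply mul_le_mul_of_nonneg_left _ (by positivity)
                apply mul_le_mul_of_nonneg_left (by linarith) (by positivity)
              have e2 : (a0:ℤ) * (((a0:ℤ)+m0+2) * w c0) ≤ (a0:ℤ) * Wt :=
                mul_le_mul_of_nonneg_left hw0z (by positivity)
              nlinarith [e1, e2]
            calc (a0 + m0 + 1) * ((a0 + 1 + (m0 + 2) - 1) * (w c0 + x))
                = (a0 + m0 + 2) * (w c0 + x) * (a0 + m0 + 1) := by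
                  have : a0 + 1 + (m0 + 2) - 1 = a0 + m0 + 2 := by omega
                  rw [this]; ring
              _ ≤ (a0 + m0 + 2) * ((a0 + m0 + 1) * w c0) + (a0 + m0 + 2) * ((m0 + 1) * W') := hstep
              _ ≤ (a0 + m0 + 1) * ((m0 + 2) * Wt) := final
          have := Nat.le_of_mul_le_mul_left hgoal (by omega)
          calc (a0 + 1 + (m0 + 2) - 1) * (P.filter fun v => r v ∈ insert c0 F').card
              ≤ (a0 + 1 + (m0 + 2) - 1) * (w c0 + x) := Nat.mul_le_mul_left _ hpopins
            _ ≤ (m0 + 2) * Wt := this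


lemma dich (k n0 d ρ s W F' G Hb Wb Wa mf Dc' ab : ℕ)
    (hk : 1 ≤ k) (hdn : d ≤ n0) (hrd : ρ ≤ d) (hs : k * n0 ≤ s) (hn0 : 1 ≤ n0)
    (hab : ab + ρ = s + 1)
    (ihb : (ab + n0 - 1) * Hb ≤ n0 * Wb) (hWb : Wb + F' ≤ W)
    (iha : (s + 1 + mf - 1) * G ≤ mf * Wa) (hWa : Wa ≤ Dc') (hDc : F' + Dc' = W)
    (hG : G ≤ Dc') (hmf : mf + d = n0) (hnot : W + 1 ≤ (k+1) * Hb + k * d) :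
    (k+1) * (F' + G) ≤ W + k * k * d := by
  have hns : n0 ≤ s := le_trans (by nlinarith) hs
  have hrs : ρ ≤ s := by omega
  by_cases hc : W ≤ k * d
  · have h1 : F' + G ≤ W := by omega
    calc (k+1) * (F' + G) = (F' + G) + k * (F' + G) := by ring
      _ ≤ W + k * W := by
          have := Nat.mul_le_mul_left k h1; omega
      _ ≤ W + k * (k * d) := by
          have := Nat.mul_le_mul_left k hc; omega
      _ = W + k * k * d := by ring
  · -- hard case
    push_neg at hc
    obtain ⟨e, hWe⟩ : ∃ e, W = k * d + e + 1 := ⟨W - k * d - 1, by omega⟩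
    -- rename: e' := e + 1 ≥ 1, W = k*d + e'
    set e' := e + 1 with he'
    have hWe' : k * d + e' = W := by omega
    have hHb : e' + 1 ≤ (k + 1) * Hb := by omega
    have hB : Wb ≤ Dc' := by omega
    have hWaB : Wa ≤ Dc' := hWa
    have hihb : (s + (n0 - ρ)) * Hb ≤ n0 * Dc' := by
      have heq : ab + n0 - 1 = s + (n0 - ρ) := by omega
      rw [heq] at ihb
      exact le_trans ihb (Nat.mul_le_mul_left _ hB)
    have hiha : (s + mf) * G ≤ mf * Dc' := by
      have heq : s + 1 + mf - 1 = s + mf := by omega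
      rw [heq] at iha
      exact le_trans iha (Nat.mul_le_mul_left _ hWaB)
    have hmfle : mf ≤ n0 - ρ := by omega
    -- A1
    have A1 : k * e' * (s + mf) ≤ (k+1) * (s * Dc') := by
      have s1 : e' * (s + mf) ≤ (e' + 1) * (s + (n0 - ρ)) :=
        Nat.mul_le_mul (by omega) (by omega)
      have s2 : (e' + 1) * (s + (n0 - ρ)) ≤ ((k+1) * Hb) * (s + (n0 - ρ)) :=
        Nat.mul_le_mul_right _ hHb
      have s3 : ((k+1) * Hb) * (s + (n0 - ρ)) = (k+1) * ((s + (n0 - ρ)) * Hb) := by ring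
      have s4 : (k+1) * ((s + (n0 - ρ)) * Hb) ≤ (k+1) * (n0 * Dc') :=
        Nat.mul_le_mul_left _ hihb
      have s5 : e' * (s + mf) ≤ (k+1) * (n0 * Dc') := by
        calc e' * (s + mf) ≤ (e' + 1) * (s + (n0 - ρ)) := s1
          _ ≤ ((k+1) * Hb) * (s + (n0 - ρ)) := s2
          _ = (k+1) * ((s + (n0 - ρ)) * Hb) := s3
          _ ≤ (k+1) * (n0 * Dc') := s4
      calc k * e' * (s + mf) = k * (e' * (s + mf)) := by ring
        _ ≤ k * ((k+1) * (n0 * Dc')) := Nat.mul_le_mul_left _ s5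
        _ = (k+1) * ((k * n0) * Dc') := by ring
        _ ≤ (k+1) * (s * Dc') := Nat.mul_le_mul_left _ (Nat.mul_le_mul_right _ hs)
    -- A2
    have A2 : ((k+1) * G) * (s + mf) ≤ (k+1) * (mf * Dc') := by
      calc ((k+1) * G) * (s + mf) = (k+1) * ((s + mf) * G) := by ring
        _ ≤ (k+1) * (mf * Dc') := Nat.mul_le_mul_left _ hiha
    have c8 : (k * e' + (k+1) * G) * (s + mf) ≤ ((k+1) * Dc') * (s + mf) := by
      calc (k * e' + (k+1) * G) * (s + mf)
          = k * e' * (s + mf) + ((k+1) * G) * (s + mf) := by ring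
        _ ≤ (k+1) * (s * Dc') + (k+1) * (mf * Dc') := Nat.add_le_add A1 A2
        _ = ((k+1) * Dc') * (s + mf) := by ring
    have c9 : k * e' + (k+1) * G ≤ (k+1) * Dc' :=
      Nat.le_of_mul_le_mul_right c8 (by omega)
    -- conclude
    have c10 : ((k+1) * F' + (k+1) * G) + k * e' ≤ (k * k * d + W) + k * e' := by
      calc ((k+1) * F' + (k+1) * G) + k * e'
          = (k+1) * F' + (k * e' + (k+1) * G) := by ring
        _ ≤ (k+1) * F' + (k+1) * Dc' := Nat.add_le_add_left c9 _
        _ = (k+1) * (F' + Dc') := by ring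
        _ = (k+1) * W := by rw [hDc]
        _ = k * W + W := by ring
        _ = k * (k * d + e') + W := by rw [hWe']
        _ = (k * k * d + W) + k * e' := by ring
    have c11 : (k+1) * F' + (k+1) * G ≤ k * k * d + W := Nat.add_le_add_iff_right.mp c10
    calc (k+1) * (F' + G) = (k+1) * F' + (k+1) * G := by ring
      _ ≤ k * k * d + W := c11
      _ = W + k * k * d := by ring


set_option maxHeartbeats 3200000 in
lemma aux {V : Type*} [DecidableEq V] :
    ∀ (k : ℕ) (S : Finset V) (part : V → ℕ),
    (∀ v ∈ S, part v < k) →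
    (∀ i j : ℕ, i ≤ j → j < k →
      (S.filter fun v => part v = i).card ≤ (S.filter fun v => part v = j).card) →
    ∀ (L : V → Finset ℕ),
    (∀ v ∈ S, (S.filter fun v => ¬ part v = k - 1).card + 1 ≤ (L v).card) →
    ∀ (D : Finset V), D ⊆ S → ∀ (r : V → ℕ), (∀ v ∈ D, r v ∈ L v) →
    ∃ f : V → ℕ, (∀ v ∈ S, f v ∈ L v) ∧
      (∀ u v, u ∈ S → v ∈ S → part u ≠ part v → f u ≠ f v) ∧
      D.card ≤ k * (D.filter fun v => f v = r v).card := by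
  intro k
  induction k with
  | zero =>
    intro S part hp _ L _ D hD r _
    have hS : S = ∅ := eq_empty_of_forall_notMem (fun v hv => absurd (hp v hv) (Nat.not_lt_zero _))
    subst hS
    have hDe : D = ∅ := subset_empty.mp hD
    subst hDe
    exact ⟨fun _ => 0, by simp, by simp, by simp⟩
  | succ k ih =>
    intro S part hp mono L hL D hD r hr
    classical
    by_cases hk1 : k = 0
    · -- single part: satisfy everything
      subst hk1
      obtain ⟨f, hfdef⟩ : ∃ f : V → ℕ,
          f = fun v => if v ∈ D then r v else if h : (L v).Nonempty then h.choose else 0 :=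
        ⟨_, rfl⟩
      refine ⟨f, ?_, ?_, ?_⟩
      · intro v hv
        rw [hfdef]
        by_cases hvD : v ∈ D
        · simp only [if_pos hvD]; exact hr v hvD
        · have hne : (L v).Nonempty := by
            apply card_pos.mp
            have := hL v hv
            omega
          simp only [if_neg hvD, dif_pos hne]
          exact hne.choose_spec
      · intro u v hu hv hne
        have h1 := hp u hu
        have h2 := hp v hv
        omega
      · have heq : D.filter (fun v => f v = r v) = D := by
          apply filter_eq_self.mpr
          intro v hv
          rw [hfdef]
          simp only [if_pos hv]
        rw [heq]
        omega
    · -- main case : k ≥ 1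
      have hk : 1 ≤ k := by omega
      set P0 := S.filter (fun v => part v = 0) with hP0def
      set D0 := D.filter (fun v => part v = 0) with hD0def
      set Dr := D.filter (fun v => ¬ part v = 0) with hDrdef
      set R := D0.image r with hRdef
      set Drp := Dr.filter (fun v => ¬ r v ∈ R) with hDrpdef
      set Pf := P0.filter (fun v => ¬ v ∈ D) with hPfdef
      -- restate hL
      have hLs : ∀ v ∈ S, (S.filter fun v => ¬ part v = k).card + 1 ≤ (L v).card := by
        intro v hv
        have := hL v hv
        simpa using this
      have hD0P0 : D0 ⊆ P0 := by
        intro v hv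
        rw [hD0def] at hv
        rw [hP0def]
        have := mem_filter.mp hv
        exact mem_filter.mpr ⟨hD this.1, this.2⟩
      have hdn0 : D0.card ≤ P0.card := card_le_card hD0P0
      have hrhd : R.card ≤ D0.card := card_image_le
      have hsplitD : D0.card + Dr.card = D.card := by
        rw [hD0def, hDrdef]
        exact card_filter_add_card_filter_not (p := fun v => part v = 0)
      -- k * n0 ≤ s
      have hfib : (S.filter fun v => ¬ part v = k).card
          = ∑ i ∈ range k, (S.filter fun v => part v = i).card := by
        rw [card_eq_sum_card_fiberwise (f := part) (t := range k)
          (fun v hv => by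
            have h1 := mem_filter.mp hv
            have h2 := hp v h1.1
            exact mem_range.mpr (by omega))]
        refine Finset.sum_congr rfl fun i hi => ?_
        have hik : i < k := mem_range.mp hi
        congr 1
        ext v
        simp only [mem_filter]
        constructor
        · rintro ⟨⟨h1, _⟩, h3⟩; exact ⟨h1, h3⟩
        · rintro ⟨h1, h3⟩; exact ⟨⟨h1, by omega⟩, h3⟩
      have hkn0 : k * P0.card ≤ (S.filter fun v => ¬ part v = k).card := by
        rw [hfib]
        calc k * P0.card = ∑ _i ∈ range k, P0.card := by rw [sum_const, card_range, smul_eq_mul]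
          _ ≤ ∑ i ∈ range k, (S.filter fun v => part v = i).card := by
              refine Finset.sum_le_sum fun i hi => ?_
              rw [hP0def]
              exact mono 0 i (Nat.zero_le _) (by have := mem_range.mp hi; omega)
      have hn0s : P0.card ≤ (S.filter fun v => ¬ part v = k).card :=
        le_trans (Nat.le_mul_of_pos_left P0.card hk) hkn0
      have hrs : R.card ≤ (S.filter fun v => ¬ part v = k).card := by omega
      obtain ⟨ab, habdef⟩ : ∃ ab,
          ab + R.card = (S.filter fun v => ¬ part v = k).card + 1 :=
        ⟨(S.filter fun v => ¬ part v = k).card + 1 - R.card, by omega⟩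
      -- hit for strategy b
      obtain ⟨Fb, hFbU, hFbhit, hFbineq⟩ := hit Dr r ab (by omega) P0.card P0
        (fun u => L u \ R) le_rfl
        (fun u hu => by
          show ab ≤ (L u \ R).card
          have h1 := card_le_card_sdiff_add_card (s := L u) (t := R)
          have h2 : u ∈ S := by
            rw [hP0def] at hu
            exact (mem_filter.mp hu).1
          have h3 := hLs u h2
          omega)
      have hWbDc : (Dr.filter fun v => r v ∈ P0.biUnion fun u => L u \ R).card ≤ Drp.card := by
        apply card_le_card
        intro v hv
        have h1 := mem_filter.mp hv
        rw [hDrpdef]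
        refine mem_filter.mpr ⟨h1.1, ?_⟩
        obtain ⟨u, _, hmem⟩ := mem_biUnion.mp h1.2
        exact (mem_sdiff.mp hmem).2
      have hDc : (Dr.filter fun v => r v ∈ R).card + Drp.card = Dr.card := by
        rw [hDrpdef]
        exact card_filter_add_card_filter_not (p := fun v => r v ∈ R)
      -- hit for strategy a
      obtain ⟨Fa, hFaU, hFahit, hFaineq⟩ := hit Drp r
        ((S.filter fun v => ¬ part v = k).card + 1) (by omega) Pf.card Pf L le_rfl
        (fun u hu => by
          apply hLs u
          rw [hPfdef] at hu
          have h1 := (mem_filter.mp hu).1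
          rw [hP0def] at h1
          exact (mem_filter.mp h1).1)
      have hGDc : (Drp.filter fun v => r v ∈ Fa).card ≤ Drp.card :=
        card_le_card (filter_subset _ _)
      have hWaDc : (Drp.filter fun v => r v ∈ Pf.biUnion L).card ≤ Drp.card :=
        card_le_card (filter_subset _ _)
      have hmfd : Pf.card + D0.card = P0.card := by
        have h1 : P0.filter (fun v => v ∈ D) = D0 := by
          rw [hP0def, hD0def]
          ext v
          simp only [filter_filter, mem_filter]
          constructor
          · rintro ⟨h1, h2, h3⟩; exact ⟨h3, h2⟩
          · rintro ⟨h1, h2⟩; exact ⟨hD h1, h2, h1⟩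
        have h2 := card_filter_add_card_filter_not (s := P0) (p := fun v => v ∈ D)
        rw [h1] at h2
        rw [hPfdef]
        omega
      -- common construction
      have common : ∀ σ : V → ℕ, (∀ u ∈ P0, σ u ∈ L u) →
          ∃ f : V → ℕ, (∀ v ∈ S, f v ∈ L v) ∧
            (∀ u v, u ∈ S → v ∈ S → part u ≠ part v → f u ≠ f v) ∧
            (∀ v ∈ P0, f v = σ v) ∧
            Dr.card ≤ (Dr.filter fun v => r v ∈ P0.image σ).card
                + k * ((D.filter fun v => ¬ part v = 0 ∧ f v = r v).card) := by
        intro σ hσ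
        set I0 := P0.image σ with hI0def
        set S' := S.filter (fun v => ¬ part v = 0) with hS'def
        set D' := Dr.filter (fun v => ¬ r v ∈ I0) with hD'def
        have hI0card : I0.card ≤ P0.card := card_image_le
        have hfe : ∀ i : ℕ, S'.filter (fun v => part v - 1 = i)
            = S.filter (fun v => part v = i + 1) := by
          intro i
          rw [hS'def]
          ext v
          simp only [filter_filter, mem_filter]
          constructor
          · rintro ⟨h1, h2, h3⟩; exact ⟨h1, by omega⟩
          · rintro ⟨h1, h2⟩; exact ⟨h1, by omega, by omega⟩
        have hs'eq : (S'.filter (fun v => ¬ (part v - 1) = k - 1)).card + P0.card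
            = (S.filter fun v => ¬ part v = k).card := by
          have hfe2 : S'.filter (fun v => ¬ (part v - 1) = k - 1) =
              (S.filter fun v => ¬ part v = k).filter (fun v => ¬ part v = 0) := by
            rw [hS'def]
            ext v
            simp only [filter_filter, mem_filter]
            constructor
            · rintro ⟨h1, h2, h3⟩
              have := hp v h1
              exact ⟨h1, by omega, h2⟩
            · rintro ⟨h1, h2, h3⟩
              exact ⟨h1, h3, by omega⟩
          have hfe3 : (S.filter fun v => ¬ part v = k).filter (fun v => part v = 0) = P0 := by
            rw [hP0def]
            ext v
            simp only [filter_filter, mem_filter]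
            constructor
            · rintro ⟨h1, _, h3⟩; exact ⟨h1, h3⟩
            · rintro ⟨h1, h3⟩; exact ⟨h1, by omega, h3⟩
          have h2 := card_filter_add_card_filter_not
            (s := S.filter fun v => ¬ part v = k) (p := fun v => part v = 0)
          rw [hfe3] at h2
          rw [hfe2]
          omega
        obtain ⟨f', hf'L, hf'prop, hf'cnt⟩ := ih S' (fun v => part v - 1)
          (fun v hv => by
            show part v - 1 < k
            rw [hS'def] at hv
            have h1 := mem_filter.mp hv
            have := hp v h1.1
            have := h1.2
            omega)
          (fun i j hij hj => by
            show (S'.filter (fun v => part v - 1 = i)).card ≤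
              (S'.filter (fun v => part v - 1 = j)).card
            rw [hfe i, hfe j]
            exact mono (i+1) (j+1) (by omega) (by omega))
          (fun v => L v \ I0)
          (fun v hv => by
            show (S'.filter (fun v => ¬ (part v - 1) = k - 1)).card + 1 ≤ (L v \ I0).card
            have h1 : v ∈ S := by
              rw [hS'def] at hv
              exact (mem_filter.mp hv).1
            have h2 := hLs v h1
            have h3 := card_le_card_sdiff_add_card (s := L v) (t := I0)
            omega)
          D'
          (fun v hv => by
            rw [hD'def] at hv
            have h1 := mem_filter.mp hv
            have h2 := mem_filter.mp h1.1
            rw [hS'def]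
            exact mem_filter.mpr ⟨hD h2.1, h2.2⟩)
          r
          (fun v hv => by
            show r v ∈ L v \ I0
            rw [hD'def] at hv
            have h1 := mem_filter.mp hv
            have h2 := mem_filter.mp h1.1
            exact mem_sdiff.mpr ⟨hr v h2.1, h1.2⟩)
        obtain ⟨f, hfdef⟩ : ∃ f : V → ℕ,
            f = fun v => if part v = 0 then σ v else f' v := ⟨_, rfl⟩
        have hfP0 : ∀ v ∈ P0, f v = σ v := by
          intro v hv
          rw [hP0def] at hv
          rw [hfdef]
          simp only [if_pos (mem_filter.mp hv).2]
        have hfS' : ∀ v, ¬ part v = 0 → f v = f' v := by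
          intro v hv
          rw [hfdef]
          simp only [if_neg hv]
        refine ⟨f, ?_, ?_, hfP0, ?_⟩
        · intro v hv
          by_cases h0 : part v = 0
          · rw [hfP0 v (by rw [hP0def]; exact mem_filter.mpr ⟨hv, h0⟩)]
            exact hσ v (by rw [hP0def]; exact mem_filter.mpr ⟨hv, h0⟩)
          · rw [hfS' v h0]
            have := hf'L v (by rw [hS'def]; exact mem_filter.mpr ⟨hv, h0⟩)
            exact (mem_sdiff.mp this).1
        · intro u v hu hv hne
          by_cases hu0 : part u = 0 <;> by_cases hv0 : part v = 0
          · exact absurd (hu0.trans hv0.symm) hne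
          · rw [hfP0 u (by rw [hP0def]; exact mem_filter.mpr ⟨hu, hu0⟩), hfS' v hv0]
            have h1 : σ u ∈ I0 := by
              rw [hI0def]
              exact mem_image_of_mem σ (by rw [hP0def]; exact mem_filter.mpr ⟨hu, hu0⟩)
            have h2 := hf'L v (by rw [hS'def]; exact mem_filter.mpr ⟨hv, hv0⟩)
            intro heq
            exact (mem_sdiff.mp h2).2 (heq ▸ h1)
          · rw [hfS' u hu0, hfP0 v (by rw [hP0def]; exact mem_filter.mpr ⟨hv, hv0⟩)]
            have h1 : σ v ∈ I0 := by
              rw [hI0def]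
              exact mem_image_of_mem σ (by rw [hP0def]; exact mem_filter.mpr ⟨hv, hv0⟩)
            have h2 := hf'L u (by rw [hS'def]; exact mem_filter.mpr ⟨hu, hu0⟩)
            intro heq
            exact (mem_sdiff.mp h2).2 (heq ▸ h1)
          · rw [hfS' u hu0, hfS' v hv0]
            exact hf'prop u v (by rw [hS'def]; exact mem_filter.mpr ⟨hu, hu0⟩)
              (by rw [hS'def]; exact mem_filter.mpr ⟨hv, hv0⟩) (by omega)
        · -- counting
          have hsplitDr : (Dr.filter fun v => r v ∈ I0).card + D'.card = Dr.card := by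
            rw [hD'def]
            exact card_filter_add_card_filter_not (p := fun v => r v ∈ I0)
          have hsub : D'.filter (fun v => f' v = r v) ⊆
              D.filter (fun v => ¬ part v = 0 ∧ f v = r v) := by
            intro v hv
            have h1 := mem_filter.mp hv
            have h2 := mem_filter.mp h1.1
            have h3 := mem_filter.mp h2.1
            refine mem_filter.mpr ⟨h3.1, h3.2, ?_⟩
            rw [hfS' v h3.2]
            exact h1.2
          have h4 := card_le_card hsub
          have h5 := hf'cnt
          have h6 := Nat.mul_le_mul_left k h4
          omega
      -- branch decision
      by_cases hbr : (k+1) * (Dr.filter fun v => r v ∈ Fb).card + k * D0.card ≤ Dr.card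
      · -- strategy B
        obtain ⟨σb, hσb⟩ : ∃ σ : V → ℕ, ∀ u ∈ P0, σ u ∈ L u ∧ σ u ∈ Fb := by
          refine ⟨fun u => if h : ((L u \ R) ∩ Fb).Nonempty then h.choose else 0, ?_⟩
          intro u hu
          have hne : ((L u \ R) ∩ Fb).Nonempty := by
            have := hFbhit u hu
            simpa using this
          simp only [dif_pos hne]
          have := mem_inter.mp hne.choose_spec
          exact ⟨(mem_sdiff.mp this.1).1, this.2⟩
        obtain ⟨f, hfL, hfprop, _, hfineq⟩ := common σb (fun u hu => (hσb u hu).1)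
        have hHHb : (Dr.filter fun v => r v ∈ P0.image σb).card ≤
            (Dr.filter fun v => r v ∈ Fb).card := by
          apply card_le_card
          intro v hv
          have h1 := mem_filter.mp hv
          refine mem_filter.mpr ⟨h1.1, ?_⟩
          obtain ⟨u, hu, heq⟩ := mem_image.mp h1.2
          exact heq ▸ (hσb u hu).2
        refine ⟨f, hfL, hfprop, ?_⟩
        have hXsat : (D.filter fun v => ¬ part v = 0 ∧ f v = r v).card ≤
            (D.filter fun v => f v = r v).card := by
          apply card_le_card
          intro v hv
          have h1 := mem_filter.mp hv
          exact mem_filter.mpr ⟨h1.1, h1.2.2⟩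
        set X := (D.filter fun v => ¬ part v = 0 ∧ f v = r v).card with hXdef
        set Hb := (Dr.filter fun v => r v ∈ Fb).card with hHbdef
        have hWle : Dr.card ≤ Hb + k * X := by omega
        have c1 : (k+1) * Dr.card ≤ (k+1) * Hb + (k+1) * (k * X) := by
          calc (k+1) * Dr.card ≤ (k+1) * (Hb + k * X) := Nat.mul_le_mul_left _ hWle
            _ = (k+1) * Hb + (k+1) * (k * X) := by ring
        have c3 : k * (Dr.card + D0.card) ≤ k * ((k+1) * X) := by
          zify at c1 hbr ⊢
          nlinarith [c1, hbr]
        have c4 : Dr.card + D0.card ≤ (k+1) * X := Nat.le_of_mul_le_mul_left c3 hk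
        calc D.card = D0.card + Dr.card := hsplitD.symm
          _ ≤ (k+1) * X := by omega
          _ ≤ (k+1) * (D.filter fun v => f v = r v).card := Nat.mul_le_mul_left _ hXsat
      · -- strategy A
        have hn0pos : 1 ≤ P0.card := by
          by_contra hcon
          have hP0e : P0 = ∅ := card_eq_zero.mp (by omega)
          have hFbe : Fb = ∅ := by
            rw [hP0e] at hFbU
            simpa using subset_empty.mp (by simpa using hFbU)
          rw [hFbe] at hbr
          simp only [notMem_empty] at hbr
          have hD00 : D0.card = 0 := by
            have := hdn0; omega
          rw [hD00] at hbr
          simp at hbr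
        obtain ⟨σa, hσaL, hσaD, hσaF⟩ : ∃ σ : V → ℕ, (∀ u ∈ P0, σ u ∈ L u) ∧
            (∀ u ∈ D0, σ u = r u) ∧ (∀ u ∈ Pf, σ u ∈ Fa) := by
          refine ⟨fun u => if hd : u ∈ D then r u else
            (if h : (L u ∩ Fa).Nonempty then h.choose else 0), ?_, ?_, ?_⟩
          · intro u hu
            by_cases huD : u ∈ D
            · simp only [dif_pos huD]
              exact hr u huD
            · have hne : (L u ∩ Fa).Nonempty := by
                have := hFahit u (by rw [hPfdef]; exact mem_filter.mpr ⟨hu, huD⟩)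
                simpa using this
              simp only [dif_neg huD, dif_pos hne]
              exact (mem_inter.mp hne.choose_spec).1
          · intro u hu
            rw [hD0def] at hu
            simp only [dif_pos (mem_filter.mp hu).1]
          · intro u hu
            have h1 : u ∉ D := by
              rw [hPfdef] at hu
              exact (mem_filter.mp hu).2
            have hne : (L u ∩ Fa).Nonempty := by
              have := hFahit u hu
              simpa using this
            simp only [dif_neg h1, dif_pos hne]
            exact (mem_inter.mp hne.choose_spec).2
        obtain ⟨f, hfL, hfprop, hfP0, hfineq⟩ := common σa hσaL
        have hHa : (Dr.filter fun v => r v ∈ P0.image σa).card ≤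
            (Dr.filter fun v => r v ∈ R).card + (Drp.filter fun v => r v ∈ Fa).card := by
          have hsub : Dr.filter (fun v => r v ∈ P0.image σa) ⊆
              (Dr.filter fun v => r v ∈ R) ∪ (Drp.filter fun v => r v ∈ Fa) := by
            intro v hv
            have h1 := mem_filter.mp hv
            obtain ⟨u, huP0, hσu⟩ := mem_image.mp h1.2
            by_cases hR : r v ∈ R
            · exact mem_union_left _ (mem_filter.mpr ⟨h1.1, hR⟩)
            · apply mem_union_right
              refine mem_filter.mpr ⟨by rw [hDrpdef]; exact mem_filter.mpr ⟨h1.1, hR⟩, ?_⟩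
              by_cases huD : u ∈ D
              · exfalso
                have hu0 : u ∈ D0 := by
                  rw [hD0def]
                  rw [hP0def] at huP0
                  exact mem_filter.mpr ⟨huD, (mem_filter.mp huP0).2⟩
                have h5 : r u ∈ R := by
                  rw [hRdef]
                  exact mem_image_of_mem r hu0
                rw [hσaD u hu0] at hσu
                exact hR (hσu ▸ h5)
              · have huPf : u ∈ Pf := by
                  rw [hPfdef]
                  exact mem_filter.mpr ⟨huP0, huD⟩
                exact hσu ▸ hσaF u huPf
          calc (Dr.filter fun v => r v ∈ P0.image σa).card
              ≤ ((Dr.filter fun v => r v ∈ R) ∪ (Drp.filter fun v => r v ∈ Fa)).card :=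
                card_le_card hsub
            _ ≤ _ := card_union_le _ _
        have hkey : (k+1) * ((Dr.filter fun v => r v ∈ R).card
            + (Drp.filter fun v => r v ∈ Fa).card) ≤ Dr.card + k * k * D0.card := by
          apply dich k P0.card D0.card R.card (S.filter fun v => ¬ part v = k).card
            Dr.card (Dr.filter fun v => r v ∈ R).card (Drp.filter fun v => r v ∈ Fa).card
            (Dr.filter fun v => r v ∈ Fb).card
            (Dr.filter fun v => r v ∈ P0.biUnion fun u => L u \ R).card
            (Drp.filter fun v => r v ∈ Pf.biUnion L).card
            Pf.card Drp.card ab hk hdn0 hrhd hkn0 hn0pos habdef hFbineq (by omega)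
            hFaineq hWaDc hDc hGDc hmfd (by omega)
        refine ⟨f, hfL, hfprop, ?_⟩
        have hD0sat : D0 ⊆ D.filter (fun v => f v = r v) := by
          intro v hv
          have h1 : v ∈ D := by
            rw [hD0def] at hv
            exact (mem_filter.mp hv).1
          refine mem_filter.mpr ⟨h1, ?_⟩
          rw [hfP0 v (hD0P0 hv)]
          exact hσaD v hv
        have hdisj : Disjoint D0 (D.filter (fun v => ¬ part v = 0 ∧ f v = r v)) := by
          rw [disjoint_left]
          intro v h1 h2
          refine (mem_filter.mp h2).2.1 ?_
          rw [hD0def] at h1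
          exact (mem_filter.mp h1).2
        have hsat : D0.card + (D.filter fun v => ¬ part v = 0 ∧ f v = r v).card ≤
            (D.filter fun v => f v = r v).card := by
          rw [← card_union_of_disjoint hdisj]
          apply card_le_card
          intro v hv
          rcases mem_union.mp hv with h | h
          · exact hD0sat h
          · have h1 := mem_filter.mp h
            exact mem_filter.mpr ⟨h1.1, h1.2.2⟩
        set X := (D.filter fun v => ¬ part v = 0 ∧ f v = r v).card with hXdef
        set FG := (Dr.filter fun v => r v ∈ R).card
          + (Drp.filter fun v => r v ∈ Fa).card with hFGdef
        have cW : Dr.card ≤ FG + k * X := by omega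
        have c1 : (k+1) * Dr.card ≤ (k+1) * FG + (k+1) * (k * X) := by
          calc (k+1) * Dr.card ≤ (k+1) * (FG + k * X) := Nat.mul_le_mul_left _ cW
            _ = (k+1) * FG + (k+1) * (k * X) := by ring
        have c3 : k * (D0.card + Dr.card) ≤ k * ((k+1) * (D0.card + X)) := by
          zify at c1 hkey ⊢
          nlinarith [c1, hkey]
        have c4 : D0.card + Dr.card ≤ (k+1) * (D0.card + X) :=
          Nat.le_of_mul_le_mul_left c3 hk
        calc D.card = D0.card + Dr.card := hsplitD.symm
          _ ≤ (k+1) * (D0.card + X) := c4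
          _ ≤ (k+1) * (D.filter fun v => f v = r v).card := Nat.mul_le_mul_left _ hsat


end helpers



theorem stmt_12 (k : ℕ) (hk : 2 ≤ k) (n : Fin k → ℕ) (hn : ∀ i, 1 ≤ n i)
    (hmono : Monotone n)
    (L : (Σ i : Fin k, Fin (n i)) → Finset ℕ)
    (hL : ∀ v, (L v).card = (∑ i ∈ Finset.univ.erase (⟨k - 1, by omega⟩ : Fin k), n i) + 1)
    (D : Finset (Σ i : Fin k, Fin (n i))) (hD : D.Nonempty)
    (r : (Σ i : Fin k, Fin (n i)) → ℕ) (hr : ∀ v ∈ D, r v ∈ L v) :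
    ∃ f, properListColoring (SimpleGraph.completeMultipartiteGraph fun i => Fin (n i)) L f ∧
      D.card ≤ k * (D.filter fun v => f v = r v).card := by
  classical
  have hfiber : ∀ i0 : Fin k,
      ((univ : Finset (Σ i : Fin k, Fin (n i))).filter fun v => v.1 = i0).card = n i0 := by
    intro i0
    have hb := Finset.card_bij
      (s := (univ : Finset (Fin (n i0))))
      (t := (univ : Finset (Σ i : Fin k, Fin (n i))).filter fun v => v.1 = i0)
      (i := fun x _ => (⟨i0, x⟩ : Σ i : Fin k, Fin (n i)))
      (fun x hx => mem_filter.mpr ⟨mem_univ _, rfl⟩)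
      (fun x hx y hy h => by simpa using h)
      (fun b hb => by
        obtain ⟨b1, b2⟩ := b
        have h1 : b1 = i0 := (mem_filter.mp hb).2
        subst h1
        exact ⟨b2, mem_univ _, rfl⟩)
    rw [← hb, card_univ, Fintype.card_fin]
  have hval : ∀ (i : ℕ) (hi : i < k),
      ((univ : Finset (Σ i : Fin k, Fin (n i))).filter fun v => (v.1 : ℕ) = i)
        = ((univ : Finset (Σ i : Fin k, Fin (n i))).filter fun v => v.1 = (⟨i, hi⟩ : Fin k)) := by
    intro i hi
    ext v
    simp only [mem_filter, mem_univ, true_and, Fin.ext_iff]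
  have hcard : ((univ : Finset (Σ i : Fin k, Fin (n i))).filter
      fun v => ¬ (v.1 : ℕ) = k - 1).card
      = ∑ i ∈ Finset.univ.erase (⟨k - 1, by omega⟩ : Fin k), n i := by
    rw [card_eq_sum_card_fiberwise (f := Sigma.fst)
      (t := Finset.univ.erase (⟨k - 1, by omega⟩ : Fin k))
      (fun x hx => by
        have h2 : ¬ (x.1 : ℕ) = k - 1 := by simpa using (mem_filter.mp hx).2
        exact mem_erase.mpr ⟨fun he => h2 (by rw [he]), mem_univ _⟩)]
    refine Finset.sum_congr rfl fun i hi => ?_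
    have hi' : i ≠ (⟨k - 1, by omega⟩ : Fin k) := (mem_erase.mp hi).1
    have heq : (((univ : Finset (Σ i : Fin k, Fin (n i))).filter
        fun v => ¬ (v.1 : ℕ) = k - 1).filter fun v => v.1 = i)
        = (univ : Finset (Σ i : Fin k, Fin (n i))).filter fun v => v.1 = i := by
      ext v
      simp only [filter_filter, mem_filter, mem_univ, true_and]
      constructor
      · rintro ⟨_, h2⟩; exact h2
      · intro h2
        refine ⟨?_, h2⟩
        rw [h2]
        intro hh
        exact hi' (Fin.ext hh)
    rw [heq, hfiber i]
  obtain ⟨f, hfL, hfprop, hcnt⟩ := aux k (univ : Finset (Σ i : Fin k, Fin (n i)))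
    (fun v => (v.1 : ℕ)) (fun v _ => v.1.isLt)
    (fun i j hij hjk => by
      have hik : i < k := lt_of_le_of_lt hij hjk
      rw [hval i hik, hval j hjk, hfiber, hfiber]
      exact hmono (Fin.mk_le_mk.mpr hij))
    L
    (fun v _ => by
      show ((univ : Finset (Σ i : Fin k, Fin (n i))).filter
          fun v => ¬ (v.1 : ℕ) = k - 1).card + 1 ≤ (L v).card
      rw [hL v, hcard])
    D (subset_univ D) r hr
  refine ⟨f, ⟨fun v => hfL v (mem_univ v), fun u v hadj => ?_⟩, hcnt⟩
  have hne : u.1 ≠ v.1 := by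
    simpa [SimpleGraph.completeMultipartiteGraph] using hadj
  exact hfprop u v (mem_univ u) (mem_univ v) (fun h => hne (Fin.val_injective h))
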